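/- Let M be a positive integer and f : ℤ → ℂ an M-periodic function. For Re t > 0, the series F₀(t) := Σ_{n≥1} f(n) e^{-nt} converges absolutely and F₀(t) = (Σ_{ℓ=1}^{M} f(ℓ) e^{-ℓt}) / (1 - e^{-Mt}). Consequently F₀ extends to a meromorphic function on ℂ whose poles are contained in (2πi/M)ℤ, and lim_{t→0} t·F₀(t) = mean f; in particular, if mean f ≠ 0 then t = 0 is a simple pole of F₀ with residue mean f, and if mean f = 0 then F₀ is holomorphic at 0. -/

import Mathlib

open Complex Filter MeasureTheory

/-- For an `M`-periodic `f : ℤ → ℂ`, the generating series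
`F₀(t) = Σ_{n≥1} f(n) e^{-nt}` converges absolutely for `Re t > 0` with sum
`G(t) = (Σ_{ℓ=1}^M f(ℓ) e^{-ℓt})/(1 - e^{-Mt})`; `G` is holomorphic outside `(2πi/M)ℤ`,
`t·G(t) → mean f` as `t → 0`, and if `mean f = 0` then `G` is holomorphic at `0`. -/
theorem statement2 (M : ℕ) (hM : 0 < M) (f : ℤ → ℂ) (hf : ∀ n : ℤ, f (n + M) = f n)
    (G : ℂ → ℂ)
    (hG : ∀ t : ℂ, G t =
      (∑ ℓ ∈ Finset.Icc 1 M, f ℓ * Complex.exp (-(ℓ : ℂ) * t)) /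
        (1 - Complex.exp (-(M : ℂ) * t))) :
    (∀ t : ℂ, 0 < t.re →
        Summable (fun n : ℕ => f (n + 1) * Complex.exp (-((n : ℂ) + 1) * t)) ∧
        ∑' n : ℕ, f (n + 1) * Complex.exp (-((n : ℂ) + 1) * t) = G t) ∧
    (∀ t : ℂ, (∀ n : ℤ, t ≠ 2 * Real.pi * Complex.I * n / M) → DifferentiableAt ℂ G t) ∧
    Filter.Tendsto (fun t : ℂ => t * G t) (nhdsWithin 0 {(0 : ℂ)}ᶜ)
      (nhds ((M : ℂ)⁻¹ * ∑ ℓ ∈ Finset.range M, f ℓ)) ∧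
    ((M : ℂ)⁻¹ * ∑ ℓ ∈ Finset.range M, f ℓ = 0 →
      ∃ H : ℂ → ℂ, AnalyticAt ℂ H 0 ∧ ∀ᶠ t in nhdsWithin 0 {(0 : ℂ)}ᶜ, H t = G t) := by
  have hM0 : (M : ℂ) ≠ 0 := Nat.cast_ne_zero.mpr hM.ne'
  set N : ℂ → ℂ := fun t => ∑ ℓ ∈ Finset.Icc 1 M, f ℓ * Complex.exp (-(ℓ : ℂ) * t) with hNdef
  set D : ℂ → ℂ := fun t => 1 - Complex.exp (-(M : ℂ) * t) with hDdef
  have hG' : ∀ t : ℂ, G t = N t / D t := hG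
  -- periodicity consequences
  have fq : ∀ (q : ℕ) (n : ℤ), f (n + q * M) = f n := by
    intro q
    induction q with
    | zero => intro n; simp
    | succ q ih =>
      intro n
      have e : (n : ℤ) + (q + 1 : ℕ) * M = (n + q * M) + M := by push_cast; ring
      rw [e, hf, ih]
  have fmod : ∀ n : ℕ, f n = f ((n % M : ℕ) : ℤ) := by
    intro n
    have h : (n : ℤ) = ((n % M : ℕ) : ℤ) + ((n / M : ℕ) : ℤ) * (M : ℤ) := by
      exact_mod_cast (Nat.mod_add_div' n M).symm
    rw [h, fq]
  have hCb : ∀ n : ℕ, ‖f n‖ ≤ ∑ k ∈ Finset.range M, ‖f k‖ := by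
    intro n
    rw [fmod n]
    exact Finset.single_le_sum (f := fun k : ℕ => ‖f (k : ℤ)‖) (fun i _ => norm_nonneg _)
      (Finset.mem_range.mpr (Nat.mod_lt n hM))
  -- denominator facts
  have hDre : ∀ t : ℂ, (-(M : ℂ) * t).re = -(M * t.re) := by
    intro t; simp [Complex.mul_re]
  have hDne : ∀ t : ℂ, 0 < t.re → D t ≠ 0 := by
    intro t ht h
    have h1 : Complex.exp (-(M : ℂ) * t) = 1 := by
      have := sub_eq_zero.mp h; exact this.symm
    have habs : ‖Complex.exp (-(M : ℂ) * t)‖ = 1 := by rw [h1]; simp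
    rw [Complex.norm_exp, hDre] at habs
    have hlt : Real.exp (-(M * t.re)) < 1 := by
      apply Real.exp_lt_one_iff.mpr
      have : 0 < (M : ℝ) * t.re := mul_pos (by exact_mod_cast hM) ht
      linarith
    rw [habs] at hlt; exact lt_irrefl _ hlt
  -- Icc-to-range reindexing
  have hIccR : ∀ g : ℕ → ℂ, ∑ ℓ ∈ Finset.Icc 1 M, g ℓ = ∑ i ∈ Finset.range M, g (i + 1) := by
    intro g
    rw [← Finset.Ico_add_one_right_eq_Icc, Finset.sum_Ico_eq_sum_range]
    simp only [Nat.add_sub_cancel_left, Nat.succ_sub_one, Nat.add_sub_cancel]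
    exact Finset.sum_congr rfl fun i _ => by rw [Nat.add_comm]
  have hIccRange : ∑ ℓ ∈ Finset.Icc 1 M, f ℓ = ∑ ℓ ∈ Finset.range M, f ℓ := by
    rw [hIccR fun ℓ : ℕ => f (ℓ : ℤ)]
    have h1 := Finset.sum_range_succ' (fun i : ℕ => f (i : ℤ)) M
    have h2 := Finset.sum_range_succ (fun i : ℕ => f (i : ℤ)) M
    have h3 : f ((M : ℕ) : ℤ) = f 0 := by simpa using hf 0
    have h4 := h1.symm.trans h2
    rw [h3] at h4
    simp only [Nat.cast_zero] at h4
    exact add_right_cancel h4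
  -- Part 1
  have part1 : ∀ t : ℂ, 0 < t.re →
      Summable (fun n : ℕ => f (n + 1) * Complex.exp (-((n : ℂ) + 1) * t)) ∧
      ∑' n : ℕ, f (n + 1) * Complex.exp (-((n : ℂ) + 1) * t) = G t := by
    intro t ht
    set C : ℝ := ∑ k ∈ Finset.range M, ‖f k‖ with hC
    set r : ℝ := Real.exp (-t.re) with hr
    have hr0 : 0 ≤ r := (Real.exp_pos _).le
    have hr1 : r < 1 := Real.exp_lt_one_iff.mpr (by linarith)
    set a : ℕ → ℂ := fun n => f (n + 1) * Complex.exp (-((n : ℂ) + 1) * t) with ha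
    have hre : ∀ n : ℕ, (-((n : ℂ) + 1) * t).re = ((n : ℕ) + 1 : ℕ) * (-t.re) := by
      intro n; simp [Complex.mul_re]; ring
    have hnorm : ∀ n : ℕ, ‖a n‖ ≤ C * r * r ^ n := by
      intro n
      have h1 : ‖a n‖ = ‖f ((n : ℤ) + 1)‖ * r ^ (n + 1) := by
        rw [ha]
        simp only [norm_mul, Complex.norm_exp, hre n]
        rw [Real.exp_nat_mul]
      rw [h1]
      have h2 : ‖f ((n : ℤ) + 1)‖ ≤ C := by
        have := hCb (n + 1); push_cast at this ⊢; exact this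
      have h3 : r ^ (n + 1) = r * r ^ n := by ring
      calc ‖f ((n : ℤ) + 1)‖ * r ^ (n + 1) ≤ C * r ^ (n + 1) :=
            mul_le_mul_of_nonneg_right h2 (pow_nonneg hr0 _)
        _ = C * r * r ^ n := by rw [h3]; ring
    have hsum : Summable a :=
      Summable.of_norm_bounded ((summable_geometric_of_lt_one hr0 hr1).mul_left (C * r)) hnorm
    refine ⟨hsum, ?_⟩
    have hshift : ∀ n : ℕ, a (n + M) = Complex.exp (-(M : ℂ) * t) * a n := by
      intro n
      have e1 : ((n + M : ℕ) : ℤ) + 1 = ((n : ℤ) + 1) + M := by push_cast; ring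
      have e2 : Complex.exp (-(((n + M : ℕ) : ℂ) + 1) * t)
          = Complex.exp (-(M : ℂ) * t) * Complex.exp (-((n : ℂ) + 1) * t) := by
        rw [← Complex.exp_add]; congr 1; push_cast; ring
      simp only [ha, e1, hf ((n : ℤ) + 1), e2]
      ring
    have key : (∑ i ∈ Finset.range M, a i) + ∑' i, a (i + M) = ∑' i, a i :=
      Summable.sum_add_tsum_nat_add M hsum
    have h2 : ∑' i, a (i + M) = Complex.exp (-(M : ℂ) * t) * ∑' i, a i := by
      rw [← tsum_mul_left]
      exact tsum_congr fun n => hshift n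
    have hrange : ∑ i ∈ Finset.range M, a i = N t := by
      have hNt : N t = ∑ ℓ ∈ Finset.Icc 1 M, f ℓ * Complex.exp (-(ℓ : ℂ) * t) := rfl
      rw [hNt, hIccR fun ℓ : ℕ => f (ℓ : ℤ) * Complex.exp (-(ℓ : ℂ) * t)]
      refine Finset.sum_congr rfl fun i _ => ?_
      have e1 : ((i + 1 : ℕ) : ℤ) = (i : ℤ) + 1 := by push_cast; ring
      have e2 : ((i + 1 : ℕ) : ℂ) = (i : ℂ) + 1 := by push_cast; ring
      rw [e1, e2]
    rw [hG' t, eq_div_iff (hDne t ht)]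
    rw [h2, hrange] at key
    have : D t = 1 - Complex.exp (-(M : ℂ) * t) := rfl
    rw [this]
    linear_combination -key
  -- differentiability
  have hNdiff : Differentiable ℂ N := by
    rw [hNdef]
    exact Differentiable.fun_sum fun ℓ _ =>
      ((differentiable_id.const_mul (-(ℓ : ℂ))).cexp).const_mul (f ℓ)
  have hDdiff : Differentiable ℂ D := by
    rw [hDdef]
    exact ((differentiable_id.const_mul (-(M : ℂ))).cexp).const_sub 1
  have hGeq : G = fun t => N t / D t := funext hG'
  -- Part 2
  have part2 : ∀ t : ℂ, (∀ n : ℤ, t ≠ 2 * Real.pi * Complex.I * n / M) →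
      DifferentiableAt ℂ G t := by
    intro t htp
    have hDt : D t ≠ 0 := by
      intro h
      have h1 : Complex.exp (-(M : ℂ) * t) = 1 := (sub_eq_zero.mp h).symm
      rw [Complex.exp_eq_one_iff] at h1
      obtain ⟨k, hk⟩ := h1
      apply htp (-k)
      field_simp
      push_cast
      linear_combination -hk
    rw [hGeq]
    exact (hNdiff t).div (hDdiff t) hDt
  -- derivative of D at 0
  have hDder : HasDerivAt D (M : ℂ) 0 := by
    have h1 : HasDerivAt (fun t : ℂ => -(M : ℂ) * t) (-(M : ℂ)) 0 := by
      simpa using (hasDerivAt_id (0 : ℂ)).const_mul (-(M : ℂ))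
    have h3 := (h1.cexp).const_sub 1
    convert h3 using 1
    exacts [rfl, rfl, by simp]
  have hD0 : D 0 = 0 := by rw [hDdef]; simp
  have hN0eq : N 0 = ∑ ℓ ∈ Finset.range M, f ℓ := by
    rw [hNdef]; simpa using hIccRange
  -- Part 3
  have hslope : Tendsto (fun t : ℂ => D t / t) (nhdsWithin 0 {(0 : ℂ)}ᶜ) (nhds (M : ℂ)) := by
    have h := hasDerivAt_iff_tendsto_slope.mp hDder
    refine h.congr fun t => ?_
    rw [slope_def_field, hD0]
    simp [div_eq_mul_inv]
  have hNlim : Tendsto N (nhdsWithin 0 {(0 : ℂ)}ᶜ) (nhds (N 0)) :=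
    ((hNdiff.continuous.continuousAt).tendsto).mono_left nhdsWithin_le_nhds
  have part3 : Filter.Tendsto (fun t : ℂ => t * G t) (nhdsWithin 0 {(0 : ℂ)}ᶜ)
      (nhds ((M : ℂ)⁻¹ * ∑ ℓ ∈ Finset.range M, f ℓ)) := by
    have hinv : Tendsto (fun t : ℂ => (D t / t)⁻¹) (nhdsWithin 0 {(0 : ℂ)}ᶜ)
        (nhds ((M : ℂ)⁻¹)) := hslope.inv₀ hM0
    have hmul := hNlim.mul hinv
    have heq : ∀ t : ℂ, N t * (D t / t)⁻¹ = t * G t := by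
      intro t
      rw [hG' t, inv_div]
      ring
    have hval : N 0 * (M : ℂ)⁻¹ = (M : ℂ)⁻¹ * ∑ ℓ ∈ Finset.range M, f ℓ := by
      rw [hN0eq]; ring
    rw [hval] at hmul
    exact hmul.congr heq
  refine ⟨part1, part2, part3, ?_⟩
  -- Part 4
  intro hmean
  have hsum0 : ∑ ℓ ∈ Finset.range M, f ℓ = 0 := by
    rcases mul_eq_zero.mp hmean with h | h
    · exact absurd h (inv_ne_zero hM0)
    · exact h
  have hN0 : N 0 = 0 := by rw [hN0eq, hsum0]
  obtain ⟨pN, hpN⟩ := hNdiff.analyticAt 0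
  obtain ⟨pD, hpD⟩ := hDdiff.analyticAt 0
  have hNd := hpN.has_fpower_series_dslope_fslope
  have hDd := hpD.has_fpower_series_dslope_fslope
  have hDd0 : dslope D 0 0 ≠ 0 := by
    rw [dslope_same, hDder.deriv]
    exact hM0
  refine ⟨fun t => dslope N 0 t / dslope D 0 t, hNd.analyticAt.div hDd.analyticAt hDd0, ?_⟩
  filter_upwards [self_mem_nhdsWithin] with t ht
  have ht0 : t ≠ 0 := ht
  rw [dslope_of_ne N ht0, dslope_of_ne D ht0, slope_def_field, slope_def_field,
    hN0, hD0, sub_zero, sub_zero, sub_zero, div_div_div_comm, div_self ht0, div_one, hG' t]
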